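/- The subsemigroup of T(ℕ) generated by C_p(ℕ) equals {α : ℕ → ℕ | some fiber of α is infinite}. In particular, every function ℕ → ℕ that has at least one infinite fiber is a product of two elements of C_p(ℕ), the set of maps with infinitely many infinite fibers, and the set of maps with at least one infinite fiber is closed under composition. Consequently ⟨C_p(ℕ)⟩ ∩ (Inj(ℕ) ∩ FI(ℕ)) = ∅. -/

import Mathlib

def CpSet (α : ℕ → ℕ) : Prop := {y : ℕ | (α ⁻¹' {y}).Infinite}.Infinite

/-- Maps with at least one infinite fiber. -/
def HasInfFiber (α : ℕ → ℕ) : Prop := ∃ y : ℕ, (α ⁻¹' {y}).Infinite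

/-- ⟨C_p(ℕ)⟩ = {α | some fiber of α is infinite}: every map with an infinite
fiber is a product of two elements of C_p(ℕ), that set is closed under
composition and contains C_p(ℕ); consequently ⟨C_p(ℕ)⟩ is disjoint from
Inj(ℕ) ∩ FI(ℕ), the injective maps with infinite co-image. -/
theorem gen_Cp_eq_hasInfFiber :
    (∀ α : ℕ → ℕ, HasInfFiber α →
      ∃ β γ : ℕ → ℕ, CpSet β ∧ CpSet γ ∧ α = γ ∘ β) ∧
    (∀ α β : ℕ → ℕ, HasInfFiber α → HasInfFiber β → HasInfFiber (β ∘ α)) ∧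
    (∀ α : ℕ → ℕ, CpSet α → HasInfFiber α) ∧
    (∀ α : ℕ → ℕ, HasInfFiber α →
      ¬ (Function.Injective α ∧ ((Set.range α)ᶜ : Set ℕ).Infinite)) := by
  refine ⟨?_, ?_, ?_, ?_⟩
  · rintro α ⟨y₀, hy₀⟩
    classical
    set A : Set ℕ := α ⁻¹' {y₀} with hA
    haveI : Infinite ↥A := hy₀.to_subtype
    obtain ⟨e⟩ : Nonempty (ℕ ≃ ↥A) := nonempty_equiv_of_countable
    set β : ℕ → ℕ := fun x =>
      if h : x ∈ A then 4 * ((e.symm ⟨x, h⟩ : ℕ).unpair.1) else 2 * x + 1 with hβ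
    set γ : ℕ → ℕ := fun z =>
      if z % 2 = 1 then α (z / 2) else if z % 4 = 0 then y₀ else (z / 4).unpair.1
      with hγ
    have key : ∀ k m : ℕ, β ((e (Nat.pair k m) : ℕ)) = 4 * k := by
      intro k m
      have hmem : ((e (Nat.pair k m) : ℕ)) ∈ A := (e (Nat.pair k m)).2
      simp only [hβ, dif_pos hmem, Subtype.coe_eta, Equiv.symm_apply_apply,
        Nat.unpair_pair]
    refine ⟨β, γ, ?_, ?_, ?_⟩
    · -- CpSet β
      apply Set.infinite_of_injective_forall_mem
        (f := fun k : ℕ => 4 * k) (s := {y : ℕ | (β ⁻¹' {y}).Infinite})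
      case hi => intro a b h; simp only [] at h; omega
      case hf =>
      · intro k
        apply Set.infinite_of_injective_forall_mem
          (f := fun m : ℕ => (e (Nat.pair k m) : ℕ))
        case hi =>
          intro a b h
          have := e.injective (Subtype.ext h)
          have h2 := congrArg Nat.unpair this
          simpa [Nat.unpair_pair] using h2
        case hf =>
          intro m
          simp [Set.mem_preimage, key k m]
    · -- CpSet γ
      apply Set.infinite_of_injective_forall_mem
        (f := fun m : ℕ => m) (s := {y : ℕ | (γ ⁻¹' {y}).Infinite})
      case hi => exact fun a b h => h
      case hf =>
      intro m
      apply Set.infinite_of_injective_forall_mem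
        (f := fun j : ℕ => 4 * Nat.pair m j + 2)
      case hi =>
        intro a b h
        simp only [] at h
        have : Nat.pair m a = Nat.pair m b := by omega
        have h2 := congrArg Nat.unpair this
        simpa [Nat.unpair_pair] using h2
      case hf =>
        intro j
        have h1 : (4 * Nat.pair m j + 2) % 2 ≠ 1 := by omega
        have h2 : (4 * Nat.pair m j + 2) % 4 ≠ 0 := by omega
        have h3 : (4 * Nat.pair m j + 2) / 4 = Nat.pair m j := by omega
        have hg : γ (4 * Nat.pair m j + 2) = m := by
          simp only [hγ]
          rw [if_neg h1, if_neg h2, h3, Nat.unpair_pair]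
        simpa [Set.mem_preimage] using hg
    · -- α = γ ∘ β
      funext x
      by_cases h : x ∈ A
      · have hx : α x = y₀ := h
        set t : ℕ := (e.symm ⟨x, h⟩ : ℕ).unpair.1 with ht
        have hb : β x = 4 * t := by simp [hβ, dif_pos h, ht]
        have h1 : (4 * t) % 2 ≠ 1 := by omega
        have h2 : (4 * t) % 4 = 0 := by omega
        simp [Function.comp, hb, hγ, if_neg h1, h2, hx]
      · have hb : β x = 2 * x + 1 := by simp [hβ, dif_neg h]
        have h1 : (2 * x + 1) % 2 = 1 := by omega
        have h2 : (2 * x + 1) / 2 = x := by omega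
        simp [Function.comp, hb, hγ, h1, h2]
  · rintro α β ⟨y, hy⟩ _
    exact ⟨β y, hy.mono fun x hx => by simp [Set.mem_preimage] at hx ⊢; rw [hx]⟩
  · intro α hα
    obtain ⟨y, hy⟩ := hα.nonempty
    exact ⟨y, hy⟩
  · rintro α ⟨y, hy⟩ ⟨hinj, -⟩
    have : (α ⁻¹' {y}).Subsingleton := fun a ha b hb => hinj (by
      simp [Set.mem_preimage] at ha hb; rw [ha, hb])
    exact hy (this.finite)
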